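/- Let n ≥ 2 and let M be an n×n matrix over a commutative ring. Fix row indices i₁ < i₂ and column indices j₁ < j₂ in {1,…,n}. Denote by M_{î}^{ĵ} the matrix obtained from M by deleting row i and column j, and by M_{î₁î₂}^{ĵ₁ĵ₂} the matrix obtained by deleting rows i₁, i₂ and columns j₁, j₂. Then the Desnanot–Jacobi identity holds: det M · det M_{î₁î₂}^{ĵ₁ĵ₂} = det M_{î₁}^{ĵ₁} · det M_{î₂}^{ĵ₂} − det M_{î₁}^{ĵ₂} · det M_{î₂}^{ĵ₁}. -/

import Mathlib

open Matrix

lemma dj_succAbove_coe {n : ℕ} (p : Fin (n+1)) (x : Fin n) :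
    (p.succAbove x : ℕ) = if (x : ℕ) < (p : ℕ) then (x : ℕ) else (x : ℕ) + 1 := by
  rw [Fin.succAbove]
  split_ifs with h1 h2 <;> simp_all [Fin.lt_def] <;> omega


lemma dj_det_updateRow_single {k : ℕ} {R : Type*} [CommRing R]
    (A : Matrix (Fin (k+1)) (Fin (k+1)) R) (i j : Fin (k+1)) (d : R) :
    det (A.updateRow i (fun c => if c = j then d else 0)) =
      (-1)^((i:ℕ)+(j:ℕ)) * d * det (A.submatrix i.succAbove j.succAbove) := by
  rw [det_succ_row _ i]
  rw [Finset.sum_eq_single j]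
  · have hsub : (A.updateRow i (fun c => if c = j then d else 0)).submatrix i.succAbove j.succAbove
        = A.submatrix i.succAbove j.succAbove := by
      ext r c
      simp [Matrix.updateRow_ne (Fin.succAbove_ne i r)]
    simp [hsub]
  · intro b _ hb
    simp [Ne.symm hb, hb]
  · simp

lemma dj_adjugate_apply {k : ℕ} {R : Type*} [CommRing R]
    (A : Matrix (Fin (k+1)) (Fin (k+1)) R) (i j : Fin (k+1)) :
    adjugate A i j = (-1)^((i:ℕ)+(j:ℕ)) * det (A.submatrix j.succAbove i.succAbove) := by
  rw [adjugate_apply]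
  have : (Pi.single i (1:R)) = fun c => if c = i then (1:R) else 0 := by
    ext c; simp [Pi.single_apply]
  rw [this, dj_det_updateRow_single, add_comm (j:ℕ) (i:ℕ), mul_one]


lemma dj_det_updateRow_expand {k : ℕ} {R : Type*} [CommRing R]
    (A : Matrix (Fin k) (Fin k) R) (i : Fin k) (v : Fin k → R) :
    det (A.updateRow i v) = ∑ t, v t * det (A.updateRow i (Pi.single t (1:R))) := by
  have hv : v = ∑ t, v t • (Pi.single t (1:R) : Fin k → R) := by
    ext c; simp [Pi.single_apply]
  have h1 : det (A.updateRow i v)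
      = Matrix.detRowAlternating (Function.update (Matrix.of.symm A) i (∑ t, v t • (Pi.single t (1:R) : Fin k → R))) := by
    rw [← hv]; rfl
  rw [h1, (Matrix.detRowAlternating (R := R) (n := Fin k)).map_update_sum]
  refine Finset.sum_congr rfl fun t _ => ?_
  have h2 : Function.update A i (v t • (Pi.single t (1:R) : Fin k → R))
      = Function.update A i (v t • ((Pi.single t (1:R) : Fin k → R))) := rfl
  rw [(Matrix.detRowAlternating (R := R) (n := Fin k)).map_update_smul]
  rfl

lemma dj_base {k : ℕ} {R : Type*} [CommRing R] {i₁ i₂ : Fin k} (h : i₁ ≠ i₂) (t l : Fin k) :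
    det (((1 : Matrix (Fin k) (Fin k) R).updateRow i₂ (Pi.single t 1)).updateRow i₁
        (Pi.single l 1)) =
      (if l = i₁ ∧ t = i₂ then (1:R) else 0) - (if l = i₂ ∧ t = i₁ then (1:R) else 0) := by
  set N := ((1 : Matrix (Fin k) (Fin k) R).updateRow i₂ (Pi.single t 1)).updateRow i₁
        (Pi.single l 1) with hN
  have hone : ∀ a : Fin k, (1 : Matrix (Fin k) (Fin k) R) a = Pi.single a 1 := by
    intro a; ext c; simp [Matrix.one_apply, Pi.single_apply, eq_comm]
  have hrow : ∀ a : Fin k, N a = if a = i₁ then Pi.single l 1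
      else if a = i₂ then Pi.single t 1 else Pi.single a 1 := by
    intro a
    by_cases h1 : a = i₁
    · subst h1; simp [hN]
    · by_cases h2 : a = i₂
      · subst h2; simp [hN, h1]
      · simp [hN, h1, h2, hone]
  by_cases hA : l = i₁ ∧ t = i₂
  · obtain ⟨rfl, rfl⟩ := hA
    have hd : N = 1 := by
      ext a c
      rw [hrow]
      split_ifs with h1 h2
      · subst h1; rw [← hone]
      · subst h2; rw [← hone]
      · rw [← hone]
    simp [hd, h]
  · by_cases hB : l = i₂ ∧ t = i₁
    · obtain ⟨lB, tB⟩ := hB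
      have hd : N = (1 : Matrix (Fin k) (Fin k) R).submatrix (Equiv.swap i₁ i₂) id := by
        ext a c
        rw [hrow]
        simp only [submatrix_apply, id, hone]
        by_cases h1 : a = i₁
        · subst h1; rw [Equiv.swap_apply_left, lB, if_pos rfl]
        · by_cases h2 : a = i₂
          · subst h2; rw [Equiv.swap_apply_right, tB, if_neg h1, if_pos rfl]
          · rw [Equiv.swap_apply_of_ne_of_ne h1 h2, if_neg h1, if_neg h2]
      rw [hd, det_permute, Equiv.Perm.sign_swap h, det_one]
      simp [lB, tB, Ne.symm h]
    · rw [if_neg hA, if_neg hB, sub_zero]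
      by_cases htl : t = l
      · exact det_zero_of_row_eq h (by rw [hrow, hrow]; simp [Ne.symm h, htl])
      · by_cases hl : l = i₁
        · have ht2 : t ≠ i₂ := fun hh => hA ⟨hl, hh⟩
          have ht1 : t ≠ i₁ := hl ▸ htl
          refine det_zero_of_row_eq (Ne.symm ht2) ?_
          rw [hrow, hrow]; simp [Ne.symm h, ht1, ht2]
        · by_cases hl2 : l = i₂
          · have ht1 : t ≠ i₁ := fun hh => hB ⟨hl2, hh⟩
            have ht2 : t ≠ i₂ := hl2 ▸ htl
            refine det_zero_of_row_eq (Ne.symm ht2) ?_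
            rw [hrow, hrow]; simp [Ne.symm h, ht1, ht2]
          · refine det_zero_of_row_eq (Ne.symm hl) ?_
            rw [hrow, hrow]; simp [hl, hl2]


lemma dj_det_double {k : ℕ} {R : Type*} [CommRing R] {i₁ i₂ : Fin k} (h : i₁ ≠ i₂)
    (v w : Fin k → R) :
    det (((1 : Matrix (Fin k) (Fin k) R).updateRow i₁ v).updateRow i₂ w)
      = v i₁ * w i₂ - v i₂ * w i₁ := by
  have hswap : ∀ (x y : Fin k → R),
      ((1 : Matrix (Fin k) (Fin k) R).updateRow i₁ x).updateRow i₂ y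
        = ((1 : Matrix (Fin k) (Fin k) R).updateRow i₂ y).updateRow i₁ x := by
    intro x y
    ext a c
    by_cases h1 : a = i₁ <;> by_cases h2 : a = i₂ <;>
      simp_all [Matrix.updateRow_apply]
  rw [dj_det_updateRow_expand]
  have hexp : ∀ t : Fin k, det (((1 : Matrix (Fin k) (Fin k) R).updateRow i₁ v).updateRow i₂
      (Pi.single t 1))
      = ∑ l, v l * det (((1 : Matrix (Fin k) (Fin k) R).updateRow i₂ (Pi.single t 1)).updateRow i₁
          (Pi.single l (1:R))) := by
    intro t
    rw [hswap, dj_det_updateRow_expand]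
  simp only [hexp, dj_base h]
  simp only [mul_sub, mul_ite, mul_one, mul_zero, Finset.sum_sub_distrib, ite_and,
    Finset.sum_ite_eq, Finset.sum_ite_eq', Finset.mem_univ, if_true]
  ring_nf


lemma dj_key {m : ℕ} {R : Type*} [CommRing R]
    (M : Matrix (Fin (m + 2)) (Fin (m + 2)) R)
    (i₁ i₂ j₁ j₂ : Fin (m + 2)) (i₁' j₁' : Fin (m + 1))
    (hi₁' : (i₁' : ℕ) = (i₁ : ℕ)) (hj₁' : (j₁' : ℕ) = (j₁ : ℕ))
    (hi : (i₁ : ℕ) < (i₂ : ℕ)) (hj : (j₁ : ℕ) < (j₂ : ℕ)) :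
    M.det * (M.det *
      (M.submatrix (i₂.succAbove ∘ i₁'.succAbove) (j₂.succAbove ∘ j₁'.succAbove)).det)
      = M.det * ((M.submatrix i₁.succAbove j₁.succAbove).det *
          (M.submatrix i₂.succAbove j₂.succAbove).det
        - (M.submatrix i₁.succAbove j₂.succAbove).det *
          (M.submatrix i₂.succAbove j₁.succAbove).det) := by
  have hii : i₁ ≠ i₂ := fun hh => by rw [hh] at hi; omega
  set d : R := M.det with hd
  set B : Matrix (Fin (m+2)) (Fin (m+2)) R :=
    ((1 : Matrix (Fin (m+2)) (Fin (m+2)) R).updateRow i₁ (adjugate M j₁)).updateRow i₂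
      (adjugate M j₂) with hB
  have hdetB : det B = adjugate M j₁ i₁ * adjugate M j₂ i₂
      - adjugate M j₁ i₂ * adjugate M j₂ i₁ := dj_det_double hii _ _
  have hii' : i₁ ≠ i₂ := hii
  have hB2 : B i₂ = adjugate M j₂ := Matrix.updateRow_self
  have hB1 : B i₁ = adjugate M j₁ := by
    rw [hB, Matrix.updateRow_ne hii', Matrix.updateRow_self]
  have hB0 : ∀ r, r ≠ i₁ → r ≠ i₂ → B r = (1 : Matrix (Fin (m+2)) (Fin (m+2)) R) r :=
    fun r hr1 hr2 => by rw [hB, Matrix.updateRow_ne hr2, Matrix.updateRow_ne hr1]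
  have hBM : B * M = (M.updateRow i₁ (fun c => if c = j₁ then d else 0)).updateRow i₂
      (fun c => if c = j₂ then d else 0) := by
    ext r c
    rw [Matrix.mul_apply]
    by_cases h2 : r = i₂
    · rw [h2]
      simp only [hB2]
      rw [show (∑ t, adjugate M j₂ t * M t c) = (adjugate M * M) j₂ c from
        (Matrix.mul_apply ..).symm, Matrix.adjugate_mul, Matrix.updateRow_self]
      simp [Matrix.one_apply, eq_comm, hd]
    · by_cases h1 : r = i₁
      · rw [h1]
        simp only [hB1]
        rw [show (∑ t, adjugate M j₁ t * M t c) = (adjugate M * M) j₁ c from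
          (Matrix.mul_apply ..).symm, Matrix.adjugate_mul,
          Matrix.updateRow_ne (h1 ▸ h2 : i₁ ≠ i₂), Matrix.updateRow_self]
        simp [Matrix.one_apply, eq_comm, hd]
      · simp only [hB0 r h1 h2]
        rw [show (∑ t, (1 : Matrix (Fin (m+2)) (Fin (m+2)) R) r t * M t c)
          = ((1 : Matrix (Fin (m+2)) (Fin (m+2)) R) * M) r c from (Matrix.mul_apply ..).symm,
          one_mul, Matrix.updateRow_ne h2, Matrix.updateRow_ne h1]
  have hr : ∀ r : Fin (m+1), i₂.succAbove r = i₁ ↔ r = i₁' := by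
    intro r
    rw [Fin.ext_iff, Fin.ext_iff, dj_succAbove_coe, hi₁']
    split_ifs <;> omega
  have hc : ∀ c : Fin (m+1), j₂.succAbove c = j₁ ↔ c = j₁' := by
    intro c
    rw [Fin.ext_iff, Fin.ext_iff, dj_succAbove_coe, hj₁']
    split_ifs <;> omega
  have hsub : (M.updateRow i₁ (fun c => if c = j₁ then d else 0)).submatrix
        i₂.succAbove j₂.succAbove
      = (M.submatrix i₂.succAbove j₂.succAbove).updateRow i₁'
        (fun c => if c = j₁' then d else 0) := by
    ext r c
    rw [Matrix.submatrix_apply, Matrix.updateRow_apply, Matrix.updateRow_apply]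
    by_cases hr1 : r = i₁'
    · rw [if_pos ((hr r).mpr hr1), if_pos hr1]
      by_cases hc1 : c = j₁'
      · rw [if_pos ((hc c).mpr hc1), if_pos hc1]
      · rw [if_neg (fun hh => hc1 ((hc c).mp hh)), if_neg hc1]
    · rw [if_neg (fun hh => hr1 ((hr r).mp hh)), if_neg hr1, Matrix.submatrix_apply]
  have hdetN : det (B * M) = (-1)^((i₂:ℕ)+(j₂:ℕ)) * d * ((-1)^((i₁:ℕ)+(j₁:ℕ)) * d *
      (M.submatrix (i₂.succAbove ∘ i₁'.succAbove) (j₂.succAbove ∘ j₁'.succAbove)).det) := by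
    rw [hBM, dj_det_updateRow_single, hsub, dj_det_updateRow_single,
      Matrix.submatrix_submatrix, hi₁', hj₁']
  set D := (M.submatrix (i₂.succAbove ∘ i₁'.succAbove) (j₂.succAbove ∘ j₁'.succAbove)).det
  set d₁₁ := (M.submatrix i₁.succAbove j₁.succAbove).det
  set d₂₂ := (M.submatrix i₂.succAbove j₂.succAbove).det
  set d₁₂ := (M.submatrix i₁.succAbove j₂.succAbove).det
  set d₂₁ := (M.submatrix i₂.succAbove j₁.succAbove).det
  set s : R := (-1)^((i₁:ℕ)+(j₁:ℕ)+(i₂:ℕ)+(j₂:ℕ)) with hs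
  have hss : s * s = 1 := by
    rw [hs, ← pow_add, ← two_mul, pow_mul]
    norm_num
  have hE : s * ((d₁₁ * d₂₂ - d₁₂ * d₂₁) * d) = s * (d * (d * D)) := by
    have h0 : det (B * M) = det B * d := by rw [Matrix.det_mul, hd]
    rw [hdetN, hdetB, dj_adjugate_apply, dj_adjugate_apply, dj_adjugate_apply,
      dj_adjugate_apply] at h0
    rw [hs]
    linear_combination -h0
  have key : d₁₁ * d₂₂ - d₁₂ * d₂₁ = d * D → True := fun _ => trivial
  calc d * (d * D) = s * s * (d * (d * D)) := by rw [hss, one_mul]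
    _ = s * (s * (d * (d * D))) := by ring
    _ = s * (s * ((d₁₁ * d₂₂ - d₁₂ * d₂₁) * d)) := by rw [hE]
    _ = s * s * ((d₁₁ * d₂₂ - d₁₂ * d₂₁) * d) := by ring
    _ = d * (d₁₁ * d₂₂ - d₁₂ * d₂₁) := by rw [hss, one_mul]; ring

/-- The Desnanot–Jacobi identity for an `n×n` matrix (`n = m+2 ≥ 2`): with rows `i₁ < i₂` and
columns `j₁ < j₂` deleted as indicated,
`det M · det M_{î₁î₂}^{ĵ₁ĵ₂} = det M_{î₁}^{ĵ₁}·det M_{î₂}^{ĵ₂} − det M_{î₁}^{ĵ₂}·det M_{î₂}^{ĵ₁}`. -/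
theorem desnanot_jacobi {m : ℕ} {R : Type*} [CommRing R]
    (M : Matrix (Fin (m + 2)) (Fin (m + 2)) R)
    (i₁ i₂ j₁ j₂ : Fin (m + 2))
    (hi : (i₁ : ℕ) < (i₂ : ℕ)) (hj : (j₁ : ℕ) < (j₂ : ℕ)) :
    M.det *
      (M.submatrix
        (i₂.succAbove ∘ (⟨(i₁ : ℕ), by have := i₂.isLt; omega⟩ : Fin (m + 1)).succAbove)
        (j₂.succAbove ∘ (⟨(j₁ : ℕ), by have := j₂.isLt; omega⟩ : Fin (m + 1)).succAbove)).det
      = (M.submatrix i₁.succAbove j₁.succAbove).det *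
          (M.submatrix i₂.succAbove j₂.succAbove).det
        - (M.submatrix i₁.succAbove j₂.succAbove).det *
          (M.submatrix i₂.succAbove j₁.succAbove).det := by
  classical
  set M₀ : Matrix (Fin (m+2)) (Fin (m+2)) (MvPolynomial (Fin (m+2) × Fin (m+2)) ℤ) :=
    Matrix.of (fun i j => MvPolynomial.X (i, j)) with hM₀def
  have hM₀ : M₀.det ≠ 0 := by
    intro h0
    have h1 := congrArg (MvPolynomial.eval
      (fun p : Fin (m+2) × Fin (m+2) => if p.1 = p.2 then (1:ℤ) else 0)) h0
    rw [RingHom.map_det, RingHom.mapMatrix_apply] at h1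
    have h2 : M₀.map (MvPolynomial.eval
        (fun p : Fin (m+2) × Fin (m+2) => if p.1 = p.2 then (1:ℤ) else 0))
        = (1 : Matrix (Fin (m+2)) (Fin (m+2)) ℤ) := by
      ext i j
      simp [hM₀def, Matrix.map_apply, Matrix.one_apply]
    rw [h2, det_one] at h1
    simp at h1
  have hgen := dj_key M₀ i₁ i₂ j₁ j₂
    (⟨(i₁ : ℕ), by have := i₂.isLt; omega⟩ : Fin (m + 1))
    (⟨(j₁ : ℕ), by have := j₂.isLt; omega⟩ : Fin (m + 1)) rfl rfl hi hj
  have hgen' := mul_left_cancel₀ hM₀ hgen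
  set φ : MvPolynomial (Fin (m+2) × Fin (m+2)) ℤ →+* R :=
    MvPolynomial.eval₂Hom (Int.castRingHom R) (fun p => M p.1 p.2) with hφ
  have hmap : M₀.map φ = M := by
    ext i j
    simp [hM₀def, Matrix.map_apply, hφ]
  have hfin := congrArg φ hgen'
  simpa only [_root_.map_mul, _root_.map_sub, RingHom.map_det, RingHom.mapMatrix_apply,
    ← Matrix.submatrix_map, hmap] using hfin
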